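/- arXiv:2101.11859 — 2 statements merged into one kernel-verified Lean document; each statement's English description precedes it below -/
import Mathlib

section
/- Let Â be a symmetric n×n real matrix with eigenvalues in [−1,1], L = I − Â, μ ∈ [1/2,1), α ∈ (0,2/3), ξ = 1/α − 1, and H ∈ ℝ^{n×f}. The unique minimizer of Z ↦ tr((Z−H)ᵀ(μI+(1−μ)Â)(Z−H)) + ξ·tr(Zᵀ L Z) is Z* = {(μ + 1/α − 1)I + (2 − μ − 1/α)Â}⁻¹ (μI + (1−μ)Â) H, provided the indicated matrix is invertible. -/
open Matrix

private lemma trace_cross {n f : ℕ} (N : Matrix (Fin n) (Fin n) ℝ) (hN : Nᵀ = N)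
    (X Y : Matrix (Fin n) (Fin f) ℝ) :
    (Xᵀ * N * Y).trace = (Yᵀ * N * X).trace := by
  rw [← Matrix.trace_transpose (Xᵀ * N * Y)]
  simp [Matrix.transpose_mul, Matrix.mul_assoc, hN]

/-- GNN-LF closed-form: the unique minimizer of
`Z ↦ tr((Z−H)ᵀ(μI+(1−μ)Â)(Z−H)) + ξ tr(Zᵀ L Z)` is
`Z* = {(μ+1/α−1)I + (2−μ−1/α)Â}⁻¹ (μI+(1−μ)Â) H`, provided the matrix is invertible. -/
theorem gnn_lf_unique_minimizer (n f : ℕ)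
    (A : Matrix (Fin n) (Fin n) ℝ) (hA : A.IsHermitian)
    (heig : ∀ i, hA.eigenvalues i ∈ Set.Icc (-1 : ℝ) 1)
    (L : Matrix (Fin n) (Fin n) ℝ) (hL : L = 1 - A)
    (μ : ℝ) (hμ : μ ∈ Set.Ico (1 / 2 : ℝ) 1)
    (α : ℝ) (hα : α ∈ Set.Ioo (0 : ℝ) (2 / 3))
    (ξ : ℝ) (hξ : ξ = 1 / α - 1)
    (H : Matrix (Fin n) (Fin f) ℝ)
    (hinv : IsUnit ((μ + 1 / α - 1) • (1 : Matrix (Fin n) (Fin n) ℝ)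
        + (2 - μ - 1 / α) • A))
    (obj : Matrix (Fin n) (Fin f) ℝ → ℝ)
    (hobj : ∀ Z, obj Z =
      ((Z - H)ᵀ * (μ • (1 : Matrix (Fin n) (Fin n) ℝ) + (1 - μ) • A) * (Z - H)).trace
        + ξ * (Zᵀ * L * Z).trace)
    (Zstar : Matrix (Fin n) (Fin f) ℝ)
    (hZstar : Zstar = ((μ + 1 / α - 1) • (1 : Matrix (Fin n) (Fin n) ℝ)
        + (2 - μ - 1 / α) • A)⁻¹
        * ((μ • (1 : Matrix (Fin n) (Fin n) ℝ) + (1 - μ) • A) * H)) :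
    ∀ Z : Matrix (Fin n) (Fin f) ℝ, Z ≠ Zstar → obj Zstar < obj Z := by
  obtain ⟨hμ1, hμ2⟩ := hμ
  obtain ⟨hα1, hα2⟩ := hα
  have hAT : Aᵀ = A := by
    rw [← Matrix.conjTranspose_eq_transpose_of_trivial]; exact hA
  have h32 : (3 : ℝ) / 2 < 1 / α := by
    rw [lt_div_iff₀ hα1]; nlinarith
  set M : Matrix (Fin n) (Fin n) ℝ := μ • 1 + (1 - μ) • A with hM
  set B : Matrix (Fin n) (Fin n) ℝ := (μ + 1 / α - 1) • 1 + (2 - μ - 1 / α) • A with hB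
  -- spectral machinery
  set U : Matrix (Fin n) (Fin n) ℝ := (hA.eigenvectorUnitary : Matrix (Fin n) (Fin n) ℝ) with hU
  have hspec := hA.spectral_theorem
  have hUU : U * star U = 1 := (Matrix.mem_unitaryGroup_iff).mp hA.eigenvectorUnitary.2
  have hshift : ∀ c d : ℝ, c • (1 : Matrix (Fin n) (Fin n) ℝ) + d • A
      = U * diagonal (fun i => c + d * hA.eigenvalues i) * star U := by
    intro c d
    have hdiag : (diagonal (fun i => c + d * hA.eigenvalues i) : Matrix (Fin n) (Fin n) ℝ)
        = c • 1 + d • diagonal (RCLike.ofReal ∘ hA.eigenvalues) := by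
      ext i j
      rcases eq_or_ne i j with h | h <;>
        simp [h, Matrix.one_apply, RCLike.ofReal_real_eq_id]
    rw [hdiag, Matrix.mul_add, Matrix.add_mul, Matrix.mul_smul, Matrix.smul_mul,
      Matrix.mul_smul, Matrix.smul_mul, Matrix.mul_one, hUU, hU, ← Unitary.conjStarAlgAut_apply (S := ℝ), ← hspec]
  have hPSD : ∀ c d : ℝ, (∀ i, 0 ≤ c + d * hA.eigenvalues i) →
      (c • (1 : Matrix (Fin n) (Fin n) ℝ) + d • A).PosSemidef := by
    intro c d h
    rw [hshift c d]
    have := (Matrix.posSemidef_diagonal_iff.mpr h).mul_mul_conjTranspose_same U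
    simpa [Matrix.star_eq_conjTranspose] using this
  -- B is positive definite
  set m : ℝ := min 1 (2 * μ + 2 / α - 3) with hm_def
  have h2a : (3 : ℝ) < 2 / α := by rw [lt_div_iff₀ hα1]; nlinarith
  have hm : 0 < m := lt_min one_pos (by nlinarith)
  have hRpsd : (B - m • 1).PosSemidef := by
    have hBm : B - m • (1 : Matrix (Fin n) (Fin n) ℝ)
        = (μ + 1 / α - 1 - m) • (1 : Matrix (Fin n) (Fin n) ℝ) + (2 - μ - 1 / α) • A := by
      rw [hB]; module
    rw [hBm]
    apply hPSD
    intro i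
    obtain ⟨h1, h2⟩ := heig i
    have hm1 : m ≤ 1 := min_le_left _ _
    have hm2 : m ≤ 2 * μ + 2 / α - 3 := min_le_right _ _
    rcases le_or_gt 0 (2 - μ - 1 / α) with hd | hd
    · nlinarith [mul_le_mul_of_nonneg_left h1 hd]
    · nlinarith [mul_le_mul_of_nonpos_left h2 hd.le]
  have hBpos : B.PosDef := by
    have hsplit : B = m • 1 + (B - m • 1) := by module
    have hmI : (m • (1 : Matrix (Fin n) (Fin n) ℝ)).PosDef := by
      have : m • (1 : Matrix (Fin n) (Fin n) ℝ) = diagonal (fun _ => m) := by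
        ext i j; rcases eq_or_ne i j with h | h <;> simp [h, Matrix.one_apply]
      rw [this]; exact Matrix.PosDef.diagonal fun _ => hm
    rw [hsplit]
    exact hmI.add_posSemidef hRpsd
  -- the normal equation
  have hdet : IsUnit B.det := (Matrix.isUnit_iff_isUnit_det B).mp hinv
  have hBZ : B * Zstar = M * H := by
    rw [hZstar, ← Matrix.mul_assoc, Matrix.mul_nonsing_inv B hdet, Matrix.one_mul]
  have hBe : B = M + ξ • L := by
    rw [hB, hM, hL, hξ]; module
  -- symmetry
  have hMT : Mᵀ = M := by
    simp [hM, Matrix.transpose_add, Matrix.transpose_smul, hAT]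
  have hLT : Lᵀ = L := by
    simp [hL, Matrix.transpose_sub, hAT]
  have hBT : Bᵀ = B := by
    simp [hB, Matrix.transpose_add, Matrix.transpose_smul, hAT]
  intro Z hZ
  set W : Matrix (Fin n) (Fin f) ℝ := Z - Zstar with hW
  have hWne : W ≠ 0 := sub_ne_zero.mpr hZ
  have hkey : obj Z = obj Zstar + (Wᵀ * B * W).trace := by
    rw [hobj, hobj]
    have expand : ∀ (N : Matrix (Fin n) (Fin n) ℝ), Nᵀ = N → ∀ X : Matrix (Fin n) (Fin f) ℝ,
        ((X + W)ᵀ * N * (X + W)).trace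
          = (Xᵀ * N * X).trace + 2 * (Wᵀ * N * X).trace + (Wᵀ * N * W).trace := by
      intro N hN X
      simp only [Matrix.transpose_add, Matrix.add_mul, Matrix.mul_add, Matrix.trace_add]
      rw [trace_cross N hN X W]
      ring
    have hZeq : Z = Zstar + W := by rw [hW]; abel
    have hZHeq : Z - H = (Zstar - H) + W := by rw [hW]; abel
    rw [hZHeq, hZeq, expand M hMT (Zstar - H), expand L hLT Zstar]
    have hcross : (Wᵀ * M * (Zstar - H)).trace + ξ * (Wᵀ * L * Zstar).trace = 0 := by
      have heq : (Wᵀ * M * (Zstar - H)) + ξ • (Wᵀ * L * Zstar)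
          = Wᵀ * (B * Zstar - M * H) := by
        rw [hBe]
        simp only [Matrix.add_mul, Matrix.mul_add, Matrix.mul_sub, Matrix.sub_mul,
          Matrix.smul_mul, Matrix.mul_smul, Matrix.mul_assoc]
        abel
      have h0 : B * Zstar - M * H = 0 := sub_eq_zero.mpr hBZ
      calc (Wᵀ * M * (Zstar - H)).trace + ξ * (Wᵀ * L * Zstar).trace
          = ((Wᵀ * M * (Zstar - H)) + ξ • (Wᵀ * L * Zstar)).trace := by
            rw [Matrix.trace_add, Matrix.trace_smul]; simp
        _ = (Wᵀ * (B * Zstar - M * H)).trace := by rw [heq]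
        _ = 0 := by rw [h0, Matrix.mul_zero, Matrix.trace_zero]
    have hquad : (Wᵀ * M * W).trace + ξ * (Wᵀ * L * W).trace = (Wᵀ * B * W).trace := by
      have heq : (Wᵀ * M * W) + ξ • (Wᵀ * L * W) = Wᵀ * B * W := by
        rw [hBe]
        simp only [Matrix.add_mul, Matrix.mul_add, Matrix.smul_mul, Matrix.mul_smul,
          Matrix.mul_assoc]
      rw [← heq, Matrix.trace_add, Matrix.trace_smul]; simp
    linarith
  have hpos : 0 < (Wᵀ * B * W).trace := by
    obtain ⟨i, j, hij⟩ : ∃ i j, W i j ≠ 0 := by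
      by_contra h
      push_neg at h
      exact hWne (by ext i j; simpa using h i j)
    have htr : (Wᵀ * B * W).trace
        = ∑ k, dotProduct (fun i => W i k) (B *ᵥ fun i => W i k) := by
      simp only [Matrix.trace, Matrix.diag, Matrix.mul_apply, Matrix.mulVec,
        dotProduct, Matrix.transpose_apply, Finset.mul_sum, Finset.sum_mul]
      congr 1; ext k
      rw [Finset.sum_comm]
      congr 1; ext l
      congr 1; ext i
      ring
    rw [htr]
    apply Finset.sum_pos'
    · intro k _
      simpa using hBpos.posSemidef.dotProduct_mulVec_nonneg (fun i => W i k)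
    · refine ⟨j, Finset.mem_univ j, ?_⟩
      have hx : (fun i => W i j) ≠ 0 := fun hc => hij (by simpa using congrFun hc i)
      simpa using hBpos.dotProduct_mulVec_pos hx
  rw [hkey]
  linarith
end

section
/- Let Â be a symmetric n×n real matrix with spectral radius at most 1, μ ∈ [1/2,1), α ∈ (0,2/3), and H ∈ ℝ^{n×f}. Define Z^{(0)} = (μ/(1+αμ−α))H + ((1−μ)/(1+αμ−α))ÂH and Z^{(k+1)} = ((1+αμ−2α)/(1+αμ−α))·Â·Z^{(k)} + (αμ/(1+αμ−α))·H + ((α−αμ)/(1+αμ−α))·Â·H. Then Z^{(k)} converges as k → ∞ to {(μ+1/α−1)I + (2−μ−1/α)Â}⁻¹(μI+(1−μ)Â)H. -/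
open Matrix Filter
open scoped Matrix.Norms.L2Operator Topology

lemma l2_opNorm_one_le (n : ℕ) : ‖(1 : Matrix (Fin n) (Fin n) ℝ)‖ ≤ 1 := by
  rw [Matrix.cstar_norm_def, _root_.map_one]
  exact ContinuousLinearMap.norm_id_le

lemma l2_opNorm_diagonal_le {n : ℕ} (v : Fin n → ℝ) (hv : ∀ i, |v i| ≤ 1) :
    ‖(Matrix.diagonal v : Matrix (Fin n) (Fin n) ℝ)‖ ≤ 1 := by
  rw [Matrix.l2_opNorm_def]
  apply ContinuousLinearMap.opNorm_le_bound _ zero_le_one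
  intro x
  rw [one_mul]
  have hx : ∀ (y : EuclideanSpace ℝ (Fin n)), ‖y‖ = Real.sqrt (∑ i, (y i) ^ 2) := by
    intro y
    rw [EuclideanSpace.norm_eq]
    congr 1
    exact Finset.sum_congr rfl fun i _ => by rw [Real.norm_eq_abs, sq_abs]
  have happ : ((Matrix.toEuclideanLin (𝕜 := ℝ) (m := Fin n)
      (n := Fin n)).trans LinearMap.toContinuousLinearMap (Matrix.diagonal v)) x
      = Matrix.toEuclideanLin (Matrix.diagonal v) x := rfl
  rw [happ, hx, hx]
  apply Real.sqrt_le_sqrt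
  apply Finset.sum_le_sum
  intro i _
  have : (Matrix.toEuclideanLin (Matrix.diagonal v) x) i = v i * x i := by
    rw [Matrix.toEuclideanLin_apply]
    simp [Matrix.mulVec_diagonal]
  rw [this, mul_pow]
  have h1 : (v i) ^ 2 ≤ 1 := by
    have := hv i
    nlinarith [abs_nonneg (v i), sq_abs (v i)]
  nlinarith [sq_nonneg (x i)]

lemma l2_opNorm_hermitian_le {n : ℕ} (A : Matrix (Fin n) (Fin n) ℝ)
    (hA : A.IsHermitian) (heig : ∀ i, |hA.eigenvalues i| ≤ 1) : ‖A‖ ≤ 1 := by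
  classical
  set U : Matrix (Fin n) (Fin n) ℝ := (hA.eigenvectorUnitary : Matrix (Fin n) (Fin n) ℝ)
  have hU2 : ‖U‖ * ‖U‖ ≤ 1 := by
    have h1 : Uᴴ * U = 1 := by
      have := hA.eigenvectorUnitary.prop
      rw [Unitary.mem_iff] at this
      simpa [star_eq_conjTranspose] using this.1
    calc ‖U‖ * ‖U‖ = ‖Uᴴ * U‖ := (Matrix.l2_opNorm_conjTranspose_mul_self U).symm
    _ = ‖(1 : Matrix (Fin n) (Fin n) ℝ)‖ := by rw [h1]
    _ ≤ 1 := l2_opNorm_one_le n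
  have hU : ‖U‖ ≤ 1 := by nlinarith [norm_nonneg U]
  have hD : ‖(Matrix.diagonal ((RCLike.ofReal : ℝ → ℝ) ∘ hA.eigenvalues) :
      Matrix (Fin n) (Fin n) ℝ)‖ ≤ 1 := by
    apply l2_opNorm_diagonal_le
    intro i
    simpa using heig i
  calc ‖A‖ = ‖U * Matrix.diagonal ((RCLike.ofReal : ℝ → ℝ) ∘ hA.eigenvalues) * Uᴴ‖ := by
        conv_lhs => rw [hA.spectral_theorem]
        rw [Unitary.conjStarAlgAut_apply, star_eq_conjTranspose]
  _ ≤ ‖U * Matrix.diagonal ((RCLike.ofReal : ℝ → ℝ) ∘ hA.eigenvalues)‖ * ‖Uᴴ‖ :=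
        Matrix.l2_opNorm_mul _ _
  _ ≤ ‖U‖ * ‖Matrix.diagonal ((RCLike.ofReal : ℝ → ℝ) ∘ hA.eigenvalues)‖ * ‖Uᴴ‖ := by
        apply mul_le_mul_of_nonneg_right (Matrix.l2_opNorm_mul _ _) (norm_nonneg _)
  _ ≤ 1 * 1 * 1 := by
        rw [Matrix.l2_opNorm_conjTranspose]
        have h0 := norm_nonneg U
        have h1 := norm_nonneg (Matrix.diagonal ((RCLike.ofReal : ℝ → ℝ) ∘ hA.eigenvalues) :
          Matrix (Fin n) (Fin n) ℝ)
        nlinarith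
  _ = 1 := by norm_num

/-- GNN-LF-iter converges to GNN-LF-closed. -/
theorem gnn_lf_iter_converges (n f : ℕ)
    (A : Matrix (Fin n) (Fin n) ℝ) (hA : A.IsHermitian)
    (heig : ∀ i, |hA.eigenvalues i| ≤ 1)
    (μ : ℝ) (hμ : μ ∈ Set.Ico (1 / 2 : ℝ) 1)
    (α : ℝ) (hα : α ∈ Set.Ioo (0 : ℝ) (2 / 3))
    (H : Matrix (Fin n) (Fin f) ℝ)
    (Z : ℕ → Matrix (Fin n) (Fin f) ℝ)
    (hZ0 : Z 0 = (μ / (1 + α * μ - α)) • H + ((1 - μ) / (1 + α * μ - α)) • (A * H))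
    (hZ : ∀ k, Z (k + 1) = ((1 + α * μ - 2 * α) / (1 + α * μ - α)) • (A * Z k)
        + (α * μ / (1 + α * μ - α)) • H
        + ((α - α * μ) / (1 + α * μ - α)) • (A * H)) :
    Tendsto Z atTop (𝓝 (((μ + 1 / α - 1) • (1 : Matrix (Fin n) (Fin n) ℝ)
        + (2 - μ - 1 / α) • A)⁻¹
        * ((μ • (1 : Matrix (Fin n) (Fin n) ℝ) + (1 - μ) • A) * H))) := by
  obtain ⟨hμ1, hμ2⟩ := hμ
  obtain ⟨hα1, hα2⟩ := hα
  have hd : (0 : ℝ) < 1 + α * μ - α := by nlinarith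
  set d : ℝ := 1 + α * μ - α with hd_def
  set c : ℝ := (1 + α * μ - 2 * α) / d with hc_def
  have hc : |c| < 1 := by
    rw [abs_lt]
    constructor
    · rw [lt_div_iff₀ hd]; nlinarith
    · rw [div_lt_one hd]; nlinarith
  have hAn : ‖A‖ ≤ 1 := l2_opNorm_hermitian_le A hA heig
  set B : Matrix (Fin n) (Fin n) ℝ := c • A with hB_def
  have hBn : ‖B‖ < 1 := by
    calc ‖B‖ = |c| * ‖A‖ := by rw [hB_def, norm_smul, Real.norm_eq_abs]
    _ ≤ |c| * 1 := mul_le_mul_of_nonneg_left hAn (abs_nonneg c)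
    _ = |c| := mul_one _
    _ < 1 := hc
  set M : Matrix (Fin n) (Fin n) ℝ :=
    (μ + 1 / α - 1) • (1 : Matrix (Fin n) (Fin n) ℝ) + (2 - μ - 1 / α) • A with hM_def
  have hα0 : α ≠ 0 := ne_of_gt hα1
  have hd0 : d ≠ 0 := ne_of_gt hd
  have hd0' : 1 + α * μ - α ≠ 0 := hd0
  have e1 : μ + 1 / α - 1 = d / α := by field_simp; ring
  have e2 : 2 - μ - 1 / α = -(d / α * c) := by
    rw [hc_def]; field_simp; ring
  have hM_eq : M = (d / α) • ((1 : Matrix (Fin n) (Fin n) ℝ) - B) := by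
    rw [hM_def, e1, e2, hB_def, smul_sub, smul_smul, neg_smul, ← sub_eq_add_neg]
  have hOneSubB : IsUnit ((1 : Matrix (Fin n) (Fin n) ℝ) - B) :=
    (Units.oneSub B hBn).isUnit
  have hMdet : IsUnit M.det := by
    rw [hM_eq, Matrix.det_smul]
    exact (IsUnit.pow _ (isUnit_iff_ne_zero.mpr (div_ne_zero hd0 hα0))).mul
      ((Matrix.isUnit_iff_isUnit_det _).mp hOneSubB)
  set Zs : Matrix (Fin n) (Fin f) ℝ :=
    M⁻¹ * ((μ • (1 : Matrix (Fin n) (Fin n) ℝ) + (1 - μ) • A) * H) with hZs_def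
  -- fixed point identity
  have hfix : ((1 : Matrix (Fin n) (Fin n) ℝ) - B) * Zs
      = (α * μ / d) • H + ((α - α * μ) / d) • (A * H) := by
    have h1 : ((1 : Matrix (Fin n) (Fin n) ℝ) - B) = (α / d) • M := by
      rw [hM_eq, smul_smul]
      rw [div_mul_div_comm, mul_comm α d, div_self (by positivity), one_smul]
    have e3 : α / d * μ = α * μ / d := by ring
    have e4 : α / d * (1 - μ) = (α - α * μ) / d := by ring
    rw [h1, hZs_def, Matrix.smul_mul, ← Matrix.mul_assoc,
      Matrix.mul_nonsing_inv M hMdet, Matrix.one_mul, Matrix.add_mul,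
      Matrix.smul_mul, Matrix.smul_mul, Matrix.one_mul, smul_add, smul_smul, smul_smul,
      e3, e4]
  have hstep : ∀ k, Z (k + 1) = B * Z k + ((1 : Matrix (Fin n) (Fin n) ℝ) - B) * Zs := by
    intro k
    rw [hZ k, hfix, hB_def, Matrix.smul_mul]
    abel
  -- closed form for the iteration
  have hform : ∀ k, Z k = Zs + B ^ k * (Z 0 - Zs) := by
    intro k
    induction k with
    | zero => simp
    | succ k ih =>
      rw [hstep k, ih, Matrix.mul_add, Matrix.sub_mul, Matrix.one_mul, pow_succ',
        Matrix.mul_assoc]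
      abel
  -- norm bound
  have hbound : ∀ k, ‖B ^ k * (Z 0 - Zs)‖ ≤ ‖B‖ ^ k * ‖Z 0 - Zs‖ := by
    intro k
    induction k with
    | zero => simp
    | succ k ih =>
      calc ‖B ^ (k + 1) * (Z 0 - Zs)‖ = ‖B * (B ^ k * (Z 0 - Zs))‖ := by
            rw [pow_succ', Matrix.mul_assoc]
      _ ≤ ‖B‖ * ‖B ^ k * (Z 0 - Zs)‖ := Matrix.l2_opNorm_mul _ _
      _ ≤ ‖B‖ * (‖B‖ ^ k * ‖Z 0 - Zs‖) :=
            mul_le_mul_of_nonneg_left ih (norm_nonneg B)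
      _ = ‖B‖ ^ (k + 1) * ‖Z 0 - Zs‖ := by ring
  have htend0 : Tendsto (fun k => B ^ k * (Z 0 - Zs)) atTop (𝓝 0) := by
    apply squeeze_zero_norm hbound
    have : Tendsto (fun k => ‖B‖ ^ k) atTop (𝓝 0) :=
      tendsto_pow_atTop_nhds_zero_of_lt_one (norm_nonneg B) hBn
    simpa using this.mul_const ‖Z 0 - Zs‖
  have : Tendsto (fun k => Zs + B ^ k * (Z 0 - Zs)) atTop (𝓝 (Zs + 0)) :=
    tendsto_const_nhds.add htend0
  rw [add_zero] at this
  have heq : Z = fun k => Zs + B ^ k * (Z 0 - Zs) := funext hform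
  rw [heq]
  exact this
end
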